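/- arXiv:2405.15289 — 2 statements merged into one kernel-verified Lean document; each statement's English description precedes it below -/
import Mathlib

section
/- Let P_tr and P_te be two probability distributions on a space Z, let H be a set of classifiers Z → Y with Y finite, and for a distribution P define R_P(h, h') = P({z : h(z) ≠ h'(z)}) and, given a ground-truth labeling function y : Z → Y, R_P(h) = P({z : h(z) ≠ y(z)}). Define the H∆H-divergence d(P_tr, P_te) = sup_{h,h' ∈ H} |R_{P_tr}(h,h') − R_{P_te}(h,h')| and the best joint risk λ_H = inf_{h' ∈ H} (R_{P_tr}(h') + R_{P_te}(h')). Then for every h ∈ H: R_{P_te}(h) ≤ R_{P_tr}(h) + d(P_tr, P_te) + λ_H. -/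
open MeasureTheory

lemma stmt9_aux {Z : Type*} [MeasurableSpace Z] (P : Measure Z) [IsProbabilityMeasure P]
    {A B C : Set Z} (hsub : A ⊆ B ∪ C) :
    (P A).toReal ≤ (P B).toReal + (P C).toReal := by
  have h1 : P A ≤ P B + P C := (measure_mono hsub).trans (measure_union_le B C)
  have h2 := ENNReal.toReal_mono
    (ENNReal.add_ne_top.mpr ⟨measure_ne_top _ _, measure_ne_top _ _⟩) h1
  rwa [ENNReal.toReal_add (measure_ne_top _ _) (measure_ne_top _ _)] at h2

/-- Ben-David-style domain adaptation bound: the test risk of any hypothesis in `H`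
is bounded by its training risk plus the `H∆H`-divergence plus the best joint risk. -/
theorem stmt9 {Z Y : Type*} [MeasurableSpace Z] [Finite Y]
    (Ptr Pte : Measure Z) [IsProbabilityMeasure Ptr] [IsProbabilityMeasure Pte]
    (H : Set (Z → Y)) (hH : H.Nonempty) (y : Z → Y)
    (Rdis : Measure Z → (Z → Y) → (Z → Y) → ℝ)
    (hRdis : ∀ P h h', Rdis P h h' = (P {z | h z ≠ h' z}).toReal)
    (R : Measure Z → (Z → Y) → ℝ)
    (hR : ∀ P h, R P h = (P {z | h z ≠ y z}).toReal)
    (d lamH : ℝ)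
    (hd : d = ⨆ p : H × H, |Rdis Ptr p.1 p.2 - Rdis Pte p.1 p.2|)
    (hlam : lamH = ⨅ h' : H, (R Ptr h' + R Pte h')) :
    ∀ h ∈ H, R Pte h ≤ R Ptr h + d + lamH := by
  intro h hh
  have hbdd : BddAbove (Set.range fun p : H × H => |Rdis Ptr p.1 p.2 - Rdis Pte p.1 p.2|) := by
    refine ⟨2, ?_⟩
    rintro x ⟨p, rfl⟩
    have h1 : (0:ℝ) ≤ Rdis Ptr p.1 p.2 ∧ Rdis Ptr p.1 p.2 ≤ 1 := by
      rw [hRdis]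
      exact ⟨ENNReal.toReal_nonneg, by
        simpa using ENNReal.toReal_mono (by simp) (prob_le_one (μ := Ptr))⟩
    have h2 : (0:ℝ) ≤ Rdis Pte p.1 p.2 ∧ Rdis Pte p.1 p.2 ≤ 1 := by
      rw [hRdis]
      exact ⟨ENNReal.toReal_nonneg, by
        simpa using ENNReal.toReal_mono (by simp) (prob_le_one (μ := Pte))⟩
    rw [abs_sub_le_iff]
    constructor <;> linarith [h1.1, h1.2, h2.1, h2.2]
  have key : ∀ h' : H, R Pte h - R Ptr h - d ≤ R Ptr h' + R Pte h' := by
    rintro ⟨h', hh'⟩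
    have a1 : R Pte h ≤ Rdis Pte h h' + R Pte h' := by
      rw [hR, hRdis, hR]
      exact stmt9_aux Pte (fun z hz => by
        by_cases hc : h z = h' z
        · exact Or.inr (by simpa [hc] using hz)
        · exact Or.inl hc)
    have a3 : Rdis Ptr h h' ≤ R Ptr h + R Ptr h' := by
      rw [hR, hRdis, hR]
      exact stmt9_aux Ptr (fun z hz => by
        by_cases hc : h z = y z
        · exact Or.inr (by simp only [Set.mem_setOf_eq] at hz ⊢; rw [← hc]; exact fun e => hz e.symm)
        · exact Or.inl hc)
    have a2 : |Rdis Ptr h h' - Rdis Pte h h'| ≤ d := by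
      rw [hd]
      exact le_ciSup hbdd (⟨⟨h, hh⟩, ⟨h', hh'⟩⟩ : H × H)
    have a2' : Rdis Pte h h' ≤ Rdis Ptr h h' + d := by
      have := abs_le.mp a2
      linarith [this.1]
    simp only
    linarith
  have hlam' : R Pte h - R Ptr h - d ≤ lamH := by
    rw [hlam]
    haveI : Nonempty H := hH.to_subtype
    exact le_ciInf key
  linarith
end

section
/- Let x₁,…,x_N ∈ X, let A ∈ ℝ^{D×D} be invertible with A_inv the top D_inv rows of A⁻¹, and let f_I(x) = A g⁻¹(x) where each g⁻¹(x_i) = (z†, v_i) for a fixed z† ∈ ℝ^{D_inv} and arbitrary v_i ∈ ℝ^{D−D_inv}. Then the matrix B ∈ ℝ^{D_inv × D} defined by B = A_inv satisfies B (f_I(x_i) − f_I(x_j)) = 0 for all i, j; moreover any matrix B' ∈ ℝ^{D_inv × D} whose rows span the orthogonal complement of span{f_I(x_i) − f_I(x_j) : i,j}, when span{v_i − v_j} = ℝ^{D−D_inv}, has row space equal to the row space of A_inv. -/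
open Matrix

/-- Dot product against a fixed vector, as a linear map. -/
def dotLin {n : ℕ} (d : Fin n → ℝ) : (Fin n → ℝ) →ₗ[ℝ] ℝ where
  toFun w := w ⬝ᵥ d
  map_add' w w' := by simp [add_dotProduct]
  map_smul' c w := by simp [smul_dotProduct]

/-- Extension of Theorem 5.4: the invariant projection `A_inv` annihilates all
differences of interventional embeddings, and if the variant parts span all
directions, any matrix whose rows span the orthogonal complement of those
differences has the same row space as `A_inv`. -/
theorem stmt19 {Dinv Dvar N : ℕ} {X : Type*}
    (A : Matrix (Fin (Dinv + Dvar)) (Fin (Dinv + Dvar)) ℝ) (hA : IsUnit A)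
    (Ainv : Matrix (Fin Dinv) (Fin (Dinv + Dvar)) ℝ)
    (hAinv : ∀ i j, Ainv i j = A⁻¹ (Fin.castAdd Dvar i) j)
    (ginv : X → (Fin (Dinv + Dvar) → ℝ))
    (fI : X → (Fin (Dinv + Dvar) → ℝ)) (hfI : ∀ x, fI x = A.mulVec (ginv x))
    (x : Fin N → X) (zdag : Fin Dinv → ℝ) (v : Fin N → (Fin Dvar → ℝ))
    (hlat : ∀ i, ginv (x i) = Fin.append zdag (v i)) :
    (∀ i j, Ainv.mulVec (fI (x i) - fI (x j)) = 0) ∧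
    (∀ B' : Matrix (Fin Dinv) (Fin (Dinv + Dvar)) ℝ,
      Submodule.span ℝ (Set.range fun k => B' k)
          = ⨅ (i : Fin N) (j : Fin N), LinearMap.ker (dotLin (fI (x i) - fI (x j))) →
      Submodule.span ℝ {w : Fin Dvar → ℝ | ∃ i j, w = v i - v j} = ⊤ →
      Submodule.span ℝ (Set.range fun k => B' k)
          = Submodule.span ℝ (Set.range fun k => Ainv k)) := by
  have hdet : IsUnit A.det := (Matrix.isUnit_iff_isUnit_det A).mp hA
  have hdiff : ∀ i j, fI (x i) - fI (x j)
      = A.mulVec (Fin.append (0 : Fin Dinv → ℝ) (v i - v j)) := by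
    intro i j
    have happ : ginv (x i) - ginv (x j)
        = Fin.append (0 : Fin Dinv → ℝ) (v i - v j) := by
      funext l
      rw [Pi.sub_apply, hlat, hlat]
      refine Fin.addCases (fun k => ?_) (fun k => ?_) l <;>
        simp [Fin.append_left, Fin.append_right]
    rw [hfI, hfI, ← Matrix.mulVec_sub, happ]
  have hAA : ∀ k j, (Ainv * A) k j
      = (1 : Matrix (Fin (Dinv + Dvar)) (Fin (Dinv + Dvar)) ℝ) (Fin.castAdd Dvar k) j := by
    intro k j
    rw [← Matrix.nonsing_inv_mul A hdet]
    simp [Matrix.mul_apply, hAinv]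
  have hpart1 : ∀ i j, Ainv.mulVec (fI (x i) - fI (x j)) = 0 := by
    intro i j
    rw [hdiff, Matrix.mulVec_mulVec]
    funext k
    simp [Matrix.mulVec, dotProduct, hAA, Matrix.one_apply,
      Finset.sum_ite_eq, Fin.append_left]
  refine ⟨hpart1, ?_⟩
  intro B' hB' hvspan
  rw [hB']
  have hsplit : ∀ (u : Fin (Dinv + Dvar) → ℝ) (d : Fin Dvar → ℝ),
      u ⬝ᵥ Fin.append (0 : Fin Dinv → ℝ) d = (fun k => u (Fin.natAdd Dinv k)) ⬝ᵥ d := by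
    intro u d
    simp [dotProduct, Fin.sum_univ_add, Fin.append_left, Fin.append_right]
  apply le_antisymm
  · intro w hw
    rw [Submodule.mem_iInf] at hw
    set u := Matrix.vecMul w A with hu
    have htail : ∀ i j, (fun k => u (Fin.natAdd Dinv k)) ⬝ᵥ (v i - v j) = 0 := by
      intro i j
      have h := (Submodule.mem_iInf _).mp (hw i) j
      rw [LinearMap.mem_ker] at h
      have h' : w ⬝ᵥ (fI (x i) - fI (x j)) = 0 := h
      rw [hdiff, Matrix.dotProduct_mulVec, ← hu, hsplit] at h'
      exact h'
    have hur0 : (fun k => u (Fin.natAdd Dinv k)) = 0 := by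
      set ur : Fin Dvar → ℝ := fun k => u (Fin.natAdd Dinv k) with hurdef
      have hle : Submodule.span ℝ {w : Fin Dvar → ℝ | ∃ i j, w = v i - v j}
          ≤ LinearMap.ker (dotLin ur) := by
        rw [Submodule.span_le]
        rintro d ⟨i, j, rfl⟩
        have : (v i - v j) ⬝ᵥ ur = 0 := by
          rw [dotProduct_comm]; exact htail i j
        simpa [dotLin, LinearMap.mem_ker] using this
      rw [hvspan] at hle
      have h2 : ur ⬝ᵥ ur = 0 := by
        have := hle (Submodule.mem_top (x := ur))
        simpa [dotLin, LinearMap.mem_ker] using this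
      exact dotProduct_self_eq_zero.mp h2
    have hz : ∀ k, u (Fin.natAdd Dinv k) = 0 := fun k => congrFun hur0 k
    have hwinv : w = Matrix.vecMul u A⁻¹ := by
      rw [hu, Matrix.vecMul_vecMul, Matrix.mul_nonsing_inv A hdet, Matrix.vecMul_one]
    have hw' : w = ∑ k : Fin Dinv, u (Fin.castAdd Dvar k) • Ainv k := by
      funext j
      rw [hwinv]
      simp [Matrix.vecMul, dotProduct, Fin.sum_univ_add, hz, hAinv,
        Finset.sum_apply, Pi.smul_apply, smul_eq_mul]
    rw [hw']
    exact Submodule.sum_mem _ fun k _ =>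
      Submodule.smul_mem _ _ (Submodule.subset_span ⟨k, rfl⟩)
  · rw [Submodule.span_le]
    rintro _ ⟨k, rfl⟩
    simp only [SetLike.mem_coe, Submodule.mem_iInf, LinearMap.mem_ker]
    intro i j
    show Ainv k ⬝ᵥ (fI (x i) - fI (x j)) = 0
    simpa [Matrix.mulVec] using congrFun (hpart1 i j) k
end
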